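/- For every positive integer n, F̄_1(n) = Ḡ_1(n) − Ḡ_3(n): the total number of parts equal to 1 or 1̄ over all overpartitions of n equals the total number of parts appearing at least once minus the total number of parts appearing at least three times, summed over all overpartitions of n. -/

import Mathlib

/-- An overpartition of `n`: a pair `(μ, ν)` where `μ` is a multiset of positive integers
and `ν` is a finite set of positive integers (the overlined parts), such that the sum of the
elements of `μ` counted with multiplicity plus the sum of the elements of `ν` equals `n`. -/
def IsOverpartition (n : ℕ) (P : Multiset ℕ × Finset ℕ) : Prop :=
  (∀ m ∈ P.1, 0 < m) ∧ (∀ m ∈ P.2, 0 < m) ∧ P.1.sum + ∑ m ∈ P.2, m = n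

/-- `F̄₁ n`: the sum, over all overpartitions `(μ, ν)` of `n`, of the multiplicity of `1`
in `μ` plus `1` if `1 ∈ ν`. -/
noncomputable def overlineF1 (n : ℕ) : ℕ :=
  ∑ᶠ P ∈ {P | IsOverpartition n P},
    (P.1.count 1 + if 1 ∈ P.2 then 1 else 0)

/-- `Ḡ k n`: the sum, over all overpartitions `(μ, ν)` of `n`, of the number of positive
integers `m` whose total multiplicity — the multiplicity of `m` in `μ` plus `1` if
`m ∈ ν` — is at least `k`. -/
noncomputable def overlineG (k n : ℕ) : ℕ :=
  ∑ᶠ P ∈ {P | IsOverpartition n P},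
    ((P.1.toFinset ∪ P.2).filter fun m =>
      k ≤ P.1.count m + if m ∈ P.2 then 1 else 0).card

namespace OverStanley

/-- total multiplicity of `m` in an overpartition -/
def tot (m : ℕ) (P : Multiset ℕ × Finset ℕ) : ℕ :=
  P.1.count m + if m ∈ P.2 then 1 else 0

lemma count_mul_le_sum (μ : Multiset ℕ) (x : ℕ) : μ.count x * x ≤ μ.sum := by
  conv_rhs => rw [← Multiset.filter_add_not (· = x) μ]
  rw [Multiset.sum_add, Multiset.filter_eq', Multiset.sum_replicate, smul_eq_mul]
  exact Nat.le_add_right _ _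

/-- Finset of overpartitions of `N`. -/
def OPart (N : ℕ) : Finset (Multiset ℕ × Finset ℕ) :=
  ((N • (Finset.Icc 1 N).val).powerset.toFinset ×ˢ (Finset.Icc 1 N).powerset).filter
    fun P => (∀ m ∈ P.1, 0 < m) ∧ P.1.sum + ∑ m ∈ P.2, m = N

lemma mem_OPart {N : ℕ} {P : Multiset ℕ × Finset ℕ} : P ∈ OPart N ↔ IsOverpartition N P := by
  rw [OPart, Finset.mem_filter, Finset.mem_product, Multiset.mem_toFinset,
    Multiset.mem_powerset, Finset.mem_powerset, IsOverpartition]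
  constructor
  · rintro ⟨⟨-, hν⟩, h1, h3⟩
    exact ⟨h1, fun m hm => (Finset.mem_Icc.mp (hν hm)).1, h3⟩
  · rintro ⟨h1, h2, h3⟩
    have hμs : P.1.sum ≤ N := le_of_le_of_eq (Nat.le_add_right _ _) h3
    have hνs : ∑ m ∈ P.2, m ≤ N := le_of_le_of_eq (Nat.le_add_left _ _) h3
    refine ⟨⟨?_, ?_⟩, h1, h3⟩
    · rw [Multiset.le_iff_count]
      intro x
      by_cases hx : x ∈ P.1
      · have hx1 : 1 ≤ x := h1 x hx
        have hxN : x ≤ N :=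
          le_trans (Multiset.single_le_sum (fun y _ => Nat.zero_le y) x hx) hμs
        have hc : P.1.count x ≤ N :=
          le_trans (Nat.le_mul_of_pos_right _ hx1) (le_trans (count_mul_le_sum P.1 x) hμs)
        have hmem : x ∈ Finset.Icc 1 N := Finset.mem_Icc.mpr ⟨hx1, hxN⟩
        rw [Multiset.count_nsmul, Multiset.count_eq_one_of_mem (Finset.Icc 1 N).nodup hmem]
        simpa using hc
      · simp [Multiset.count_eq_zero_of_notMem hx]
    · intro x hx
      exact Finset.mem_Icc.mpr ⟨h2 x hx,
        le_trans (Finset.single_le_sum (fun y _ => Nat.zero_le y) hx) hνs⟩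

lemma tot_mul_le {N m : ℕ} {P : Multiset ℕ × Finset ℕ} (hP : P ∈ OPart N) :
    tot m P * m ≤ N := by
  obtain ⟨h1, h2, h3⟩ := mem_OPart.mp hP
  rw [tot, Nat.add_mul]
  have hμ : P.1.count m * m ≤ P.1.sum := count_mul_le_sum P.1 m
  have hν : (if m ∈ P.2 then 1 else 0) * m ≤ ∑ x ∈ P.2, x := by
    split_ifs with h
    · simpa using Finset.single_le_sum (f := fun y => y) (fun y _ => Nat.zero_le y) h
    · simp
  omega

noncomputable def pbar (N : ℕ) : ℕ := (OPart N).card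

noncomputable def qf (m N : ℕ) : ℕ := ((OPart N).filter fun P => tot m P = 0).card

lemma tot_eq_zero_iff {m : ℕ} {P : Multiset ℕ × Finset ℕ} :
    tot m P = 0 ↔ P.1.count m = 0 ∧ m ∉ P.2 := by
  rw [tot]; split_ifs with h <;> simp [h]

lemma slice_ab {m : ℕ} (hm : 0 < m) (a b N : ℕ) (hb : b ≤ 1) (h : (a + b) * m ≤ N) :
    ((OPart N).filter fun P =>
        P.1.count m = a ∧ (if m ∈ P.2 then 1 else 0) = b).card = qf m (N - (a + b) * m) := by
  classical
  rw [qf]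
  apply Finset.card_nbij' (i := fun P => (P.1.filter (fun x => ¬ x = m), P.2.erase m))
    (j := fun Q => (Q.1 + Multiset.replicate a m, if b = 1 then insert m Q.2 else Q.2))
  · -- forward maps into target
    rintro P hP
    rw [Finset.mem_coe, Finset.mem_filter] at hP ⊢; beta_reduce
    obtain ⟨hPO, hca, hcb⟩ := hP
    obtain ⟨h1, h2, h3⟩ := mem_OPart.mp hPO
    have hsplit : P.1.filter (fun x => x = m) + P.1.filter (fun x => ¬ x = m) = P.1 :=
      Multiset.filter_add_not _ _
    have hsum1 : P.1.sum = (P.1.filter (fun x => ¬ x = m)).sum + a * m := by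
      conv_lhs => rw [← hsplit]
      rw [Multiset.sum_add, Multiset.filter_eq', hca, Multiset.sum_replicate, smul_eq_mul]
      ring
    have hab : (a + b) * m = a * m + b * m := add_mul a b m
    have hsum2 : ∑ x ∈ P.2, x = (∑ x ∈ P.2.erase m, x) + b * m := by
      by_cases hmem : m ∈ P.2
      · have hsum : (∑ x ∈ P.2.erase m, x) + m = ∑ x ∈ P.2, x :=
          Finset.sum_erase_add P.2 _ hmem
        rw [if_pos hmem] at hcb
        rw [← hcb, one_mul]
        omega
      · rw [if_neg hmem] at hcb
        rw [Finset.erase_eq_of_notMem hmem, ← hcb]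
        simp
    constructor
    · rw [mem_OPart]
      refine ⟨fun x hx => h1 x (Multiset.mem_filter.mp hx).1,
        fun x hx => h2 x (Finset.mem_of_mem_erase hx), ?_⟩
      have hkey : (P.1.filter (fun x => ¬ x = m)).sum + (∑ x ∈ P.2.erase m, x) + (a + b) * m = N := by
        rw [← h3, hsum1, hsum2]; ring
      show (P.1.filter (fun x => ¬ x = m)).sum + (∑ x ∈ P.2.erase m, x) = N - (a + b) * m
      omega
    · rw [tot_eq_zero_iff]
      refine ⟨?_, Finset.notMem_erase _ _⟩
      rw [Multiset.count_filter_of_neg]; simp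
  · -- backward maps into source
    rintro Q hQ
    rw [Finset.mem_coe, Finset.mem_filter] at hQ ⊢; beta_reduce
    obtain ⟨hQO, hq0⟩ := hQ
    rw [tot_eq_zero_iff] at hq0
    obtain ⟨hqc, hqm⟩ := hq0
    obtain ⟨h1, h2, h3⟩ := mem_OPart.mp hQO
    have hab : (a + b) * m = a * m + b * m := add_mul a b m
    have hsum2 : (∑ x ∈ (if b = 1 then insert m Q.2 else Q.2), x) = (∑ x ∈ Q.2, x) + b * m := by
      split_ifs with hb1
      · rw [Finset.sum_insert hqm, hb1]; ring
      · have : b = 0 := by omega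
        rw [this]; ring
    refine ⟨mem_OPart.mpr ⟨?_, ?_, ?_⟩, ?_, ?_⟩
    · intro x hx
      rcases Multiset.mem_add.mp hx with hx | hx
      · exact h1 x hx
      · rw [Multiset.eq_of_mem_replicate hx]; exact hm
    · intro x hx
      split_ifs at hx with hb1
      · rcases Finset.mem_insert.mp hx with rfl | hx
        · exact hm
        · exact h2 x hx
      · exact h2 x hx
    · rw [Multiset.sum_add, Multiset.sum_replicate, smul_eq_mul, hsum2]
      have : Q.1.sum + ∑ x ∈ Q.2, x = N - (a + b) * m := h3
      have h4 : N - (a + b) * m + (a + b) * m = N := Nat.sub_add_cancel h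
      omega
    · rw [Multiset.count_add, hqc, Multiset.count_replicate_self]; omega
    · by_cases hb1 : b = 1
      · rw [if_pos hb1, if_pos (Finset.mem_insert_self m Q.2), hb1]
      · have hb0 : b = 0 := by omega
        rw [if_neg hb1, if_neg hqm, hb0]
  · -- left inverse
    rintro P hP
    rw [Finset.mem_coe, Finset.mem_filter] at hP
    obtain ⟨hPO, hca, hcb⟩ := hP
    have hsplit : P.1.filter (fun x => x = m) + P.1.filter (fun x => ¬ x = m) = P.1 :=
      Multiset.filter_add_not _ _
    ext : 1
    · show P.1.filter (fun x => ¬ x = m) + Multiset.replicate a m = P.1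
      conv_rhs => rw [← hsplit]
      rw [Multiset.filter_eq', hca, add_comm]
    · show (if b = 1 then insert m (P.2.erase m) else P.2.erase m) = P.2
      split_ifs with hb1
      · rw [hb1] at hcb
        have hmem : m ∈ P.2 := by by_contra hc; rw [if_neg hc] at hcb; omega
        exact Finset.insert_erase hmem
      · have hb0 : b = 0 := by omega
        rw [hb0] at hcb
        have hmem : m ∉ P.2 := by intro hc; rw [if_pos hc] at hcb; omega
        exact Finset.erase_eq_of_notMem hmem
  · -- right inverse
    rintro Q hQ
    rw [Finset.mem_coe, Finset.mem_filter] at hQ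
    obtain ⟨hQO, hq0⟩ := hQ
    rw [tot_eq_zero_iff] at hq0
    obtain ⟨hqc, hqm⟩ := hq0
    ext : 1
    · show (Q.1 + Multiset.replicate a m).filter (fun x => ¬ x = m) = Q.1
      rw [Multiset.filter_add]
      have h1 : Q.1.filter (fun x => ¬ x = m) = Q.1 :=
        Multiset.filter_eq_self.mpr fun x hx => by
          intro hxm; subst hxm; exact absurd (Multiset.count_pos.mpr hx) (by omega)
      have h2 : (Multiset.replicate a m).filter (fun x => ¬ x = m) = 0 := by
        rw [Multiset.filter_eq_nil]
        intro x hx; rw [Multiset.eq_of_mem_replicate hx]; simp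
      rw [h1, h2, add_zero]
    · show (if b = 1 then insert m Q.2 else Q.2).erase m = Q.2
      split_ifs with hb1
      · exact Finset.erase_insert hqm
      · exact Finset.erase_eq_of_notMem hqm

lemma slice_ab_zero {m : ℕ} (a b N : ℕ) (hb : b ≤ 1) (h : N < (a + b) * m) :
    ((OPart N).filter fun P =>
        P.1.count m = a ∧ (if m ∈ P.2 then 1 else 0) = b).card = 0 := by
  rw [Finset.card_eq_zero, Finset.filter_eq_empty_iff]
  rintro P hP ⟨hca, hcb⟩
  have := tot_mul_le (m := m) hP
  rw [tot, hca, hcb] at this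
  omega

lemma card_tot_eq {m : ℕ} (hm : 0 < m) {t : ℕ} (ht : 0 < t) (N : ℕ) :
    ((OPart N).filter fun P => tot m P = t).card
      = if t * m ≤ N then 2 * qf m (N - t * m) else 0 := by
  classical
  have hsplit : (OPart N).filter (fun P => tot m P = t) =
      ((OPart N).filter fun P => P.1.count m = t ∧ (if m ∈ P.2 then 1 else 0) = 0)
      ∪ ((OPart N).filter fun P => P.1.count m = t - 1 ∧ (if m ∈ P.2 then 1 else 0) = 1) := by
    rw [← Finset.filter_or]
    apply Finset.filter_congr
    intro P _
    rw [tot]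
    constructor
    · intro h
      by_cases hmem : m ∈ P.2
      · right; rw [if_pos hmem] at h ⊢; omega
      · left; rw [if_neg hmem] at h ⊢; omega
    · rintro (⟨h1, h2⟩ | ⟨h1, h2⟩) <;> omega
  have hdisj : Disjoint
      ((OPart N).filter fun P => P.1.count m = t ∧ (if m ∈ P.2 then 1 else 0) = 0)
      ((OPart N).filter fun P => P.1.count m = t - 1 ∧ (if m ∈ P.2 then 1 else 0) = 1) := by
    rw [Finset.disjoint_left]
    rintro P hP1 hP2
    rw [Finset.mem_filter] at hP1 hP2
    omega
  rw [hsplit, Finset.card_union_of_disjoint hdisj]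
  by_cases h : t * m ≤ N
  · rw [if_pos h]
    have e1 := slice_ab hm t 0 N (by omega) (by rw [Nat.add_zero]; exact h)
    have e2 := slice_ab hm (t - 1) 1 N (by omega) (by rw [show t - 1 + 1 = t by omega]; exact h)
    rw [Nat.add_zero] at e1
    rw [show t - 1 + 1 = t by omega] at e2
    rw [e1, e2]
    omega
  · rw [if_neg h]
    have e1 := slice_ab_zero (m := m) t 0 N (by omega) (by rw [Nat.add_zero]; omega)
    have e2 := slice_ab_zero (m := m) (t - 1) 1 N (by omega)
      (by rw [show t - 1 + 1 = t by omega]; omega)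
    rw [e1, e2]

lemma qf_eq_pbar_of_lt {m N : ℕ} (h : N < m) : qf m N = pbar N := by
  rw [qf, pbar]
  congr 1
  apply Finset.filter_true_of_mem
  intro P hP
  have := tot_mul_le (m := m) hP
  by_contra hc
  have h1 : 1 ≤ tot m P := by omega
  have := Nat.mul_le_mul_right m h1
  omega

lemma pbar_rec {m : ℕ} (hm : 0 < m) {N : ℕ} (hmN : m ≤ N) :
    pbar N = qf m N + qf m (N - m) + pbar (N - m) := by
  classical
  -- split OPart N into three parts
  have hcard : pbar N =
      ((OPart N).filter fun P => tot m P = 0).card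
      + ((OPart N).filter fun P => P.1.count m = 1 ∧ (if m ∈ P.2 then 1 else 0) = 0).card
      + ((OPart N).filter fun P =>
          1 ≤ tot m P ∧ ¬(P.1.count m = 1 ∧ (if m ∈ P.2 then 1 else 0) = 0)).card := by
    rw [pbar, Finset.card_eq_sum_ones]
    simp only [Finset.card_filter, ← Finset.sum_add_distrib]
    apply Finset.sum_congr rfl
    intro P _
    simp only [tot]
    by_cases hmem : m ∈ P.2
    · simp only [if_pos hmem]
      split_ifs <;> first | omega | simp_all | (exfalso; omega)
    · simp only [if_neg hmem]
      split_ifs <;> first | omega | simp_all | (exfalso; omega)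
  have h1 : ((OPart N).filter fun P =>
      P.1.count m = 1 ∧ (if m ∈ P.2 then 1 else 0) = 0).card = qf m (N - m) := by
    have := slice_ab hm 1 0 N (by omega) (by rw [Nat.add_zero, one_mul]; exact hmN)
    rw [Nat.add_zero, one_mul] at this
    exact this
  have h2 : ((OPart N).filter fun P =>
      1 ≤ tot m P ∧ ¬(P.1.count m = 1 ∧ (if m ∈ P.2 then 1 else 0) = 0)).card
      = pbar (N - m) := by
    rw [pbar]
    apply Finset.card_nbij'
      (i := fun P => if m ∈ P.2 then (P.1, P.2.erase m)
        else (P.1 - Multiset.replicate 2 m, insert m P.2))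
      (j := fun Q => if m ∈ Q.2 then (Q.1 + Multiset.replicate 2 m, Q.2.erase m)
        else (Q.1, insert m Q.2))
    · rintro P hP
      rw [Finset.mem_coe, Finset.mem_filter] at hP; beta_reduce; rw [Finset.mem_coe]
      obtain ⟨hPO, htot, hnot⟩ := hP
      obtain ⟨hp1, hp2, hp3⟩ := mem_OPart.mp hPO
      by_cases hmem : m ∈ P.2
      · rw [if_pos hmem]
        rw [mem_OPart]
        refine ⟨hp1, fun x hx => hp2 x (Finset.mem_of_mem_erase hx), ?_⟩
        have hsum : (∑ x ∈ P.2.erase m, x) + m = ∑ x ∈ P.2, x :=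
          Finset.sum_erase_add P.2 _ hmem
        show P.1.sum + ∑ x ∈ P.2.erase m, x = N - m
        omega
      · rw [if_neg hmem]
        -- here count ≥ 2
        have hc2 : 2 ≤ P.1.count m := by
          rw [tot, if_neg hmem] at htot
          rw [if_neg hmem] at hnot
          omega
        have hle : Multiset.replicate 2 m ≤ P.1 := Multiset.le_count_iff_replicate_le.mp hc2
        have hrec : P.1 - Multiset.replicate 2 m + Multiset.replicate 2 m = P.1 :=
          tsub_add_cancel_of_le hle
        have hsum : (P.1 - Multiset.replicate 2 m).sum + 2 * m = P.1.sum := by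
          conv_rhs => rw [← hrec]
          rw [Multiset.sum_add, Multiset.sum_replicate, smul_eq_mul]
        have h2m : 2 * m ≤ P.1.sum := by omega
        rw [mem_OPart]
        refine ⟨fun x hx => hp1 x (Multiset.mem_of_le (tsub_le_self) hx), ?_, ?_⟩
        · intro x hx
          rcases Finset.mem_insert.mp hx with rfl | hx
          · exact hm
          · exact hp2 x hx
        · show (P.1 - Multiset.replicate 2 m).sum + ∑ x ∈ insert m P.2, x = N - m
          rw [Finset.sum_insert hmem]
          omega
    · rintro Q hQ
      obtain ⟨hq1, hq2, hq3⟩ := mem_OPart.mp hQ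
      beta_reduce; rw [Finset.mem_coe, Finset.mem_filter]
      by_cases hmem : m ∈ Q.2
      · rw [if_pos hmem]
        have hsum : (∑ x ∈ Q.2.erase m, x) + m = ∑ x ∈ Q.2, x :=
          Finset.sum_erase_add Q.2 _ hmem
        refine ⟨mem_OPart.mpr ⟨?_, fun x hx => hq2 x (Finset.mem_of_mem_erase hx), ?_⟩, ?_, ?_⟩
        · intro x hx
          rcases Multiset.mem_add.mp hx with hx | hx
          · exact hq1 x hx
          · rw [Multiset.eq_of_mem_replicate hx]; exact hm
        · show (Q.1 + Multiset.replicate 2 m).sum + ∑ x ∈ Q.2.erase m, x = N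
          rw [Multiset.sum_add, Multiset.sum_replicate, smul_eq_mul]
          have hNm : N - m + m = N := Nat.sub_add_cancel hmN
          omega
        · rw [tot, Multiset.count_add, Multiset.count_replicate_self]
          omega
        · rw [Multiset.count_add, Multiset.count_replicate_self]
          intro hc
          omega
      · rw [if_neg hmem]
        refine ⟨mem_OPart.mpr ⟨hq1, ?_, ?_⟩, ?_, ?_⟩
        · intro x hx
          rcases Finset.mem_insert.mp hx with rfl | hx
          · exact hm
          · exact hq2 x hx
        · show Q.1.sum + ∑ x ∈ insert m Q.2, x = N
          rw [Finset.sum_insert hmem]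
          have hNm : N - m + m = N := Nat.sub_add_cancel hmN
          omega
        · rw [tot, if_pos (Finset.mem_insert_self m Q.2)]
          omega
        · rw [if_pos (Finset.mem_insert_self m Q.2)]
          intro hc
          omega
    · rintro P hP
      rw [Finset.mem_coe, Finset.mem_filter] at hP; beta_reduce
      obtain ⟨hPO, htot, hnot⟩ := hP
      by_cases hmem : m ∈ P.2
      · rw [if_pos hmem]
        have : m ∉ P.2.erase m := Finset.notMem_erase _ _
        rw [if_neg this]
        ext : 1
        · rfl
        · exact Finset.insert_erase hmem
      · rw [if_neg hmem]
        have hc2 : 2 ≤ P.1.count m := by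
          rw [tot, if_neg hmem] at htot
          rw [if_neg hmem] at hnot
          omega
        have hle : Multiset.replicate 2 m ≤ P.1 := Multiset.le_count_iff_replicate_le.mp hc2
        rw [if_pos (Finset.mem_insert_self m P.2)]
        ext : 1
        · exact tsub_add_cancel_of_le hle
        · exact Finset.erase_insert hmem
    · rintro Q hQ; beta_reduce
      by_cases hmem : m ∈ Q.2
      · rw [if_pos hmem]
        have hmm : m ∈ (Q.1 + Multiset.replicate 2 m, Q.2.erase m).2 ↔ False := by
          simp [Finset.notMem_erase]
        rw [if_neg (by simpa using hmm.mp)]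
        ext : 1
        · show Q.1 + Multiset.replicate 2 m - Multiset.replicate 2 m = Q.1
          simp
        · exact Finset.insert_erase hmem
      · rw [if_neg hmem]
        rw [if_pos (Finset.mem_insert_self m Q.2)]
        ext : 1
        · rfl
        · exact Finset.erase_insert hmem
  rw [hcard, h1, h2]
  rfl

/-! ### conversions -/

lemma set_eq (n : ℕ) : {P | IsOverpartition n P} = ↑(OPart n) := by
  ext P; simp [mem_OPart]

lemma overlineF1_eq (n : ℕ) : overlineF1 n = ∑ P ∈ OPart n, tot 1 P := by
  rw [overlineF1, set_eq, finsum_mem_coe_finset]; rfl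

lemma overlineG_eq (k n : ℕ) (hk : 0 < k) :
    overlineG k n = ∑ m ∈ Finset.Icc 1 n, ((OPart n).filter fun P => k ≤ tot m P).card := by
  rw [overlineG, set_eq, finsum_mem_coe_finset]
  have hP : ∀ P ∈ OPart n,
      ((P.1.toFinset ∪ P.2).filter fun m => k ≤ P.1.count m + if m ∈ P.2 then 1 else 0)
        = (Finset.Icc 1 n).filter fun m => k ≤ tot m P := by
    intro P hP
    obtain ⟨h1, h2, h3⟩ := mem_OPart.mp hP
    ext x
    rw [Finset.mem_filter, Finset.mem_filter]; simp only [Finset.mem_filter, Finset.mem_union, Multiset.mem_toFinset, Finset.mem_Icc, tot]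
    constructor
    · rintro ⟨hx, hkx⟩
      refine ⟨⟨?_, ?_⟩, hkx⟩
      · rcases hx with hx | hx
        · exact h1 x hx
        · exact h2 x hx
      · rcases hx with hx | hx
        · exact le_trans (Multiset.single_le_sum (fun y _ => Nat.zero_le y) x hx)
            (by omega)
        · have hs : x ≤ ∑ m ∈ P.2, m := Finset.single_le_sum (fun y _ => Nat.zero_le y) hx
          omega
    · rintro ⟨⟨hx1, hxn⟩, hkx⟩
      refine ⟨?_, hkx⟩
      by_cases hmem : x ∈ P.2
      · exact Or.inr hmem
      · left
        rw [if_neg hmem] at hkx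
        rw [← Multiset.count_pos]
        omega
  rw [Finset.sum_congr rfl fun P hPm => by rw [hP P hPm]]
  simp only [Finset.card_filter]
  rw [Finset.sum_comm]

/-! ### the F side in terms of qf -/

lemma F_eq (n : ℕ) :
    overlineF1 n = ∑ t ∈ Finset.Icc 1 n, 2 * qf 1 (n - t) * t := by
  rw [overlineF1_eq]
  have h1 : ∀ P ∈ OPart n, tot 1 P = ∑ t ∈ Finset.Icc 1 n, if tot 1 P = t then t else 0 := by
    intro P hP
    have htn : tot 1 P ≤ n := by
      have := tot_mul_le (m := 1) hP; omega
    rw [Finset.sum_ite_eq (Finset.Icc 1 n) (tot 1 P) (fun t => t)]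
    by_cases h0 : tot 1 P = 0
    · rw [h0]; simp
    · rw [if_pos (Finset.mem_Icc.mpr ⟨by omega, htn⟩)]
  rw [Finset.sum_congr rfl h1, Finset.sum_comm]
  apply Finset.sum_congr rfl
  intro t ht
  rw [Finset.mem_Icc] at ht
  rw [← Finset.sum_filter, Finset.sum_const, smul_eq_mul]
  have := card_tot_eq (m := 1) one_pos (t := t) (by omega) n
  rw [mul_one] at this
  rw [this, if_pos (by omega)]

/-! ### the G side -/

lemma A13 (m n : ℕ) :
    ((OPart n).filter fun P => 1 ≤ tot m P).card
      = ((OPart n).filter fun P => tot m P = 1).card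
        + ((OPart n).filter fun P => tot m P = 2).card
        + ((OPart n).filter fun P => 3 ≤ tot m P).card := by
  classical
  simp only [Finset.card_filter, ← Finset.sum_add_distrib]
  apply Finset.sum_congr rfl
  intro P _
  split_ifs <;> omega

lemma G_diff (n : ℕ) :
    (overlineG 1 n : ℤ) - overlineG 3 n
      = ∑ m ∈ Finset.Icc 1 n,
          (2 * qf m (n - m) + if 2 * m ≤ n then 2 * qf m (n - 2 * m) else 0 : ℤ) := by
  rw [overlineG_eq 1 n one_pos, overlineG_eq 3 n (by omega)]
  push_cast
  rw [← Finset.sum_sub_distrib]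
  apply Finset.sum_congr rfl
  intro m hm
  rw [Finset.mem_Icc] at hm
  have h13 := A13 m n
  have hc1 := card_tot_eq (m := m) (by omega) (t := 1) one_pos n
  have hc2 := card_tot_eq (m := m) (by omega) (t := 2) (by omega) n
  rw [if_pos (by omega : 1 * m ≤ n), one_mul] at hc1
  rw [hc1] at h13
  rw [hc2] at h13
  split_ifs at h13 ⊢ with h2m
  · push_cast [h13]; ring
  · push_cast [h13]; ring

/-! ### arithmetic with pbar -/

noncomputable def rf : ℕ → ℕ
  | 0 => qf 1 0
  | (N + 1) => qf 1 (N + 1) + rf N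

lemma rf_zero : rf 0 = pbar 0 := qf_eq_pbar_of_lt one_pos

lemma rf_add (N : ℕ) : rf (N + 1) + rf N = pbar (N + 1) := by
  induction N with
  | zero =>
      have h := pbar_rec (m := 1) one_pos (N := 1) le_rfl
      simp only [rf] at *
      have h0 : qf 1 0 = pbar 0 := qf_eq_pbar_of_lt one_pos
      norm_num at h ⊢
      omega
  | succ k ih =>
      have h := pbar_rec (m := 1) one_pos (N := k + 2) (by omega)
      simp only [rf] at *
      have e : k + 2 - 1 = k + 1 := by omega
      rw [e] at h
      simp only [show k + 1 + 1 = k + 2 from rfl] at *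
      omega

noncomputable def Sz (n : ℕ) : ℤ := ∑ k ∈ Finset.range n, (pbar k : ℤ)
noncomputable def Tz (n : ℕ) : ℤ := ∑ k ∈ Finset.range n, (rf k : ℤ)
noncomputable def Dz (n : ℕ) : ℤ :=
  ∑ m ∈ Finset.Icc 1 n, (if 2 * m ≤ n then (pbar (n - 2 * m) : ℤ) else 0)

lemma sum_Icc_one (f : ℕ → ℤ) (n : ℕ) :
    ∑ t ∈ Finset.Icc 1 n, f t = ∑ j ∈ Finset.range n, f (j + 1) := by
  induction n with
  | zero => simp
  | succ k ih =>
      rw [Finset.sum_Icc_succ_top (by omega), ih, Finset.sum_range_succ]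

lemma sum_Icc_sub (f : ℕ → ℤ) (n : ℕ) :
    ∑ t ∈ Finset.Icc 1 n, f (n - t) = ∑ k ∈ Finset.range n, f k := by
  rw [sum_Icc_one]
  rw [Finset.sum_congr rfl (fun j hj => by rw [show n - (j + 1) = n - 1 - j by omega])]
  exact Finset.sum_range_reflect f n

lemma abel_sum (u : ℕ → ℤ) (n : ℕ) :
    ∑ t ∈ Finset.Icc 1 n, (t : ℤ) * (u t - u (t + 1))
      = (∑ t ∈ Finset.Icc 1 n, u t) - n * u (n + 1) := by
  induction n with
  | zero => simp
  | succ k ih =>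
      rw [Finset.sum_Icc_succ_top (by omega), ih, Finset.sum_Icc_succ_top (by omega : 1 ≤ k + 1)]
      push_cast
      ring

lemma Trel (k : ℕ) : Tz (k + 1) + Tz k = Sz (k + 1) := by
  induction k with
  | zero =>
      simp [Tz, Sz, Finset.sum_range_succ, rf_zero]
  | succ j ih =>
      have h1 : Tz (j + 2) = Tz (j + 1) + (rf (j + 1) : ℤ) := by
        rw [Tz, Finset.sum_range_succ]; rfl
      have h2 : Tz (j + 1) = Tz j + (rf j : ℤ) := by
        rw [Tz, Finset.sum_range_succ]; rfl
      have h3 : Sz (j + 2) = Sz (j + 1) + (pbar (j + 1) : ℤ) := by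
        rw [Sz, Finset.sum_range_succ]; rfl
      have h4' : (rf (j + 1) : ℤ) + rf j = pbar (j + 1) := by exact_mod_cast rf_add j
      simp only [show j + 1 + 1 = j + 2 from rfl] at *
      omega

lemma Dshift (k : ℕ) : Dz (k + 2) = (pbar k : ℤ) + Dz k := by
  rw [Dz, Dz, sum_Icc_one, sum_Icc_one, Finset.sum_range_succ']
  have h0 : (if 2 * (0 + 1) ≤ k + 2 then (pbar (k + 2 - 2 * (0 + 1)) : ℤ) else 0) = pbar k := by
    rw [if_pos (by omega), show k + 2 - 2 * (0 + 1) = k by omega]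
  rw [h0]
  have hcongr : ∀ i ∈ Finset.range (k + 1),
      (if 2 * (i + 1 + 1) ≤ k + 2 then (pbar (k + 2 - 2 * (i + 1 + 1)) : ℤ) else 0)
        = (if 2 * (i + 1) ≤ k then (pbar (k - 2 * (i + 1)) : ℤ) else 0) := by
    intro i _
    by_cases h : 2 * (i + 1) ≤ k
    · rw [if_pos (by omega), if_pos h, show k + 2 - 2 * (i + 1 + 1) = k - 2 * (i + 1) by omega]
    · rw [if_neg (by omega), if_neg h]
  rw [Finset.sum_congr rfl hcongr, Finset.sum_range_succ, if_neg (by omega)]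
  ring

lemma Drel (k : ℕ) : Dz (k + 1) + Dz k = Sz k := by
  induction k with
  | zero =>
      simp [Dz, Sz]
  | succ j ih =>
      have h1 := Dshift j
      have h2 : Sz (j + 1) = Sz j + (pbar j : ℤ) := by
        rw [Sz, Finset.sum_range_succ]; rfl
      simp only [show j + 1 + 1 = j + 2 from rfl] at *
      omega

lemma TDrel (n : ℕ) : Tz n + Dz n = Sz n := by
  induction n with
  | zero => simp [Tz, Dz, Sz]
  | succ k ih =>
      have h1 := Trel k
      have h2 := Drel k
      omega

lemma F_final (n : ℕ) : (overlineF1 n : ℤ) = 2 * Tz n := by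
  have hF : (overlineF1 n : ℤ) = ∑ t ∈ Finset.Icc 1 n, (2 * qf 1 (n - t) * t : ℤ) := by
    rw [F_eq n]
    push_cast
    rfl
  set u : ℕ → ℤ := fun t => if t ≤ n then (rf (n - t) : ℤ) else 0 with hu
  have hqu : ∀ t ∈ Finset.Icc 1 n, (qf 1 (n - t) : ℤ) = u t - u (t + 1) := by
    intro t ht
    rw [Finset.mem_Icc] at ht
    by_cases htn : t = n
    · subst htn
      simp only [hu, if_pos le_rfl, if_neg (by omega : ¬ t + 1 ≤ t), Nat.sub_self]
      simp [rf]
    · simp only [hu, if_pos (by omega : t ≤ n), if_pos (by omega : t + 1 ≤ n)]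
      rw [show n - t = (n - (t + 1)) + 1 by omega]
      simp only [rf]
      push_cast
      ring
  calc (overlineF1 n : ℤ)
      = ∑ t ∈ Finset.Icc 1 n, (2 * qf 1 (n - t) * t : ℤ) := hF
    _ = 2 * ∑ t ∈ Finset.Icc 1 n, (t : ℤ) * (u t - u (t + 1)) := by
        rw [Finset.mul_sum]
        apply Finset.sum_congr rfl
        intro t ht
        rw [hqu t ht]
        ring
    _ = 2 * ((∑ t ∈ Finset.Icc 1 n, u t) - n * u (n + 1)) := by rw [abel_sum]
    _ = 2 * ∑ t ∈ Finset.Icc 1 n, u t := by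
        rw [show u (n + 1) = 0 by simp only [hu]; rw [if_neg (by omega)]]
        ring
    _ = 2 * ∑ t ∈ Finset.Icc 1 n, (rf (n - t) : ℤ) := by
        congr 1
        apply Finset.sum_congr rfl
        intro t ht
        rw [Finset.mem_Icc] at ht
        simp only [hu]
        rw [if_pos ht.2]
    _ = 2 * Tz n := by rw [sum_Icc_sub (fun k => (rf k : ℤ)) n, Tz]

lemma G_final (n : ℕ) : (overlineG 1 n : ℤ) - overlineG 3 n = 2 * Tz n := by
  rw [G_diff n]
  simp only [Nat.cast_ite, Nat.cast_mul, Nat.cast_zero, Nat.cast_ofNat]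
  have hstep : ∀ m ∈ Finset.Icc 1 n,
      (2 * qf m (n - m) + if 2 * m ≤ n then 2 * (qf m (n - 2 * m) : ℤ) else 0 : ℤ)
        = 2 * ((pbar (n - m) : ℤ) - if 2 * m ≤ n then (pbar (n - 2 * m) : ℤ) else 0) := by
    intro m hm
    rw [Finset.mem_Icc] at hm
    by_cases h2 : 2 * m ≤ n
    · have hrec := pbar_rec (m := m) (by omega) (N := n - m) (by omega)
      rw [show n - m - m = n - 2 * m by omega] at hrec
      have hrecz : (pbar (n - m) : ℤ) = qf m (n - m) + qf m (n - 2 * m) + pbar (n - 2 * m) := by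
        exact_mod_cast hrec
      rw [if_pos h2, if_pos h2]
      omega
    · have hq : qf m (n - m) = pbar (n - m) := qf_eq_pbar_of_lt (by omega)
      rw [if_neg h2, if_neg h2]
      have hqz : (qf m (n - m) : ℤ) = pbar (n - m) := by exact_mod_cast hq
      omega
  rw [Finset.sum_congr rfl hstep, ← Finset.mul_sum, Finset.sum_sub_distrib]
  have h1 : ∑ m ∈ Finset.Icc 1 n, (pbar (n - m) : ℤ) = Sz n :=
    sum_Icc_sub (fun k => (pbar k : ℤ)) n
  have h2 : ∑ m ∈ Finset.Icc 1 n, (if 2 * m ≤ n then (pbar (n - 2 * m) : ℤ) else 0) = Dz n := rfl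
  rw [h1, h2]
  have := TDrel n
  omega

end OverStanley

/-- Stanley's theorem for overpartitions: `F̄₁(n) = Ḡ₁(n) - Ḡ₃(n)`. -/
theorem overlineF1_eq_overlineG_sub (n : ℕ) (hn : 0 < n) :
    (overlineF1 n : ℤ) = (overlineG 1 n : ℤ) - (overlineG 3 n : ℤ) := by
  rw [OverStanley.F_final n, OverStanley.G_final n]
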